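/- Let α = 1 − c(1−p) and p̃ = p/α. Then for all x, y, t ∈ ℤ₊ with x < y: d_t(x, y) ≥ α^t · sup_{j∈ℤ₊} Σ_{k=x}^{y−1} P_k^{(p̃)}(X_t = j). -/

import Mathlib

open scoped BigOperators
open Filter

noncomputable section

/-- Probability mass function of a Binomial(n, ε) random variable, evaluated at k. -/
def binomPMF (n : ℕ) (ε : ℝ) (k : ℕ) : ℝ :=
  if k ≤ n then (n.choose k : ℝ) * ε ^ k * (1 - ε) ^ (n - k) else 0

/-- Transition function `p^{p,c}` of the random walk with binomial catastrophes:
`p^{p,c}(i, i+1) = p` and `p^{p,c}(i, j) = (1-p) C(i,j) (1-c)^j c^(i-j)` for `j ≤ i`. -/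
def stepFn (p c : ℝ) (i j : ℕ) : ℝ :=
  (if j = i + 1 then p else 0) + (if j ≤ i then (1 - p) * binomPMF i (1 - c) j else 0)

/-- `law p c x t j = P_x(X_t = j)`, the time-`t` distribution of the chain started at `x`. -/
def law (p c : ℝ) (x : ℕ) : ℕ → ℕ → ℝ
  | 0, j => if j = x then 1 else 0
  | t + 1, j => ∑' i, law p c x t i * stepFn p c i j

/-- Mass that a probability mass function assigns to a set `A ⊆ ℕ`. -/
def massOf (q : ℕ → ℝ) (A : Set ℕ) : ℝ := ∑' j, A.indicator q j

/-- Total variation distance between two distributions on ℕ (given by their pmfs):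
the maximum over subsets `A ⊆ ℕ` of `|Q₁(A) - Q₂(A)|`. -/
def tvDist (q₁ q₂ : ℕ → ℝ) : ℝ := ⨆ A : Set ℕ, |massOf q₁ A - massOf q₂ A|

lemma stepFn_eq (p c : ℝ) (i j : ℕ) :
    stepFn p c i j = (if j = i + 1 then p else 0) + (1 - p) * binomPMF i (1 - c) j := by
  unfold stepFn
  by_cases h : j ≤ i
  · rw [if_pos h]
  · rw [if_neg h, binomPMF, if_neg h, mul_zero]

lemma binomPMF_succ (i : ℕ) (ε : ℝ) (j : ℕ) :
    binomPMF (i+1) ε j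
      = ε * (if j = 0 then 0 else binomPMF i ε (j-1)) + (1 - ε) * binomPMF i ε j := by
  rcases j with _ | j'
  · simp only [if_pos rfl, mul_zero, zero_add, binomPMF, Nat.zero_le, if_pos]
    simp [pow_succ]
    ring
  · simp only [Nat.succ_sub_one, if_neg (Nat.succ_ne_zero j')]
    unfold binomPMF
    by_cases h1 : j' + 1 ≤ i + 1
    · rw [if_pos h1]
      by_cases h2 : j' + 1 ≤ i
      · rw [if_pos (by omega : j' ≤ i), if_pos h2]
        have hch : (((i+1).choose (j'+1) : ℕ) : ℝ) = (i.choose j' : ℝ) + (i.choose (j'+1) : ℝ) := by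
          rw [Nat.choose_succ_succ]; push_cast; ring
        have h3 : i - j' = (i - (j'+1)) + 1 := by omega
        have h4 : (i+1) - (j'+1) = i - j' := by omega
        rw [hch, h4, h3]
        ring
      · have hj : j' = i := by omega
        subst hj
        rw [if_pos (le_refl _), if_neg h2]
        simp only [Nat.sub_self]
        simp [Nat.choose_self]
        ring
    · rw [if_neg h1, if_neg (by omega), if_neg (by omega)]
      ring

lemma step_identity (p c : ℝ) (hα : (1 : ℝ) - c * (1 - p) ≠ 0) (i j : ℕ) :
    stepFn p c (i+1) j - stepFn p c i j
      = (1 - c*(1-p)) * ((if j = 0 then 0 else stepFn (p / (1 - c*(1-p))) c i (j-1))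
          - stepFn (p / (1 - c*(1-p))) c i j) := by
  set α : ℝ := 1 - c*(1-p) with hαdef
  set q : ℝ := p / α with hqdef
  have hq1 : α * q = p := by rw [hqdef]; field_simp
  have hq2 : α * (1 - q) = (1-p) * (1-c) := by
    have : α * (1 - q) = α - α * q := by ring
    rw [this, hq1]; rw [hαdef]; ring
  rcases j with _ | j'
  · rw [if_pos rfl]
    rw [stepFn_eq, stepFn_eq, stepFn_eq, binomPMF_succ]
    rw [if_neg (by omega : (0:ℕ) ≠ (i+1)+1), if_neg (by omega : (0:ℕ) ≠ i+1),
        if_neg (by omega : (0:ℕ) ≠ i+1), if_pos rfl]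
    have hb : (1 - (1-c)) = c := by ring
    linear_combination (binomPMF i (1-c) 0) * hq2
  · rw [if_neg (Nat.succ_ne_zero j'), Nat.succ_sub_one]
    rw [stepFn_eq, stepFn_eq, stepFn_eq, stepFn_eq, binomPMF_succ]
    rw [if_neg (Nat.succ_ne_zero j'), Nat.succ_sub_one]
    have e1 : (if j' + 1 = i + 1 + 1 then p else 0) = α * (if j' = i + 1 then q else 0) := by
      rw [if_congr (by omega : (j' + 1 = i + 1 + 1) ↔ (j' = i + 1)) rfl rfl]
      split
      exacts [hq1.symm, (mul_zero α).symm]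
    have e2 : (if j' + 1 = i + 1 then p else 0) = α * (if j' + 1 = i + 1 then q else 0) := by
      split
      exacts [hq1.symm, (mul_zero α).symm]
    rw [e1, e2]
    linear_combination (binomPMF i (1-c) (j'+1) - binomPMF i (1-c) j') * hq2

lemma law_support (p c : ℝ) (k : ℕ) : ∀ t j, k + t < j → law p c k t j = 0 := by
  intro t
  induction t with
  | zero =>
    intro j h
    simp only [law]
    rw [if_neg (by omega)]
  | succ t ih =>
    intro j h
    show (∑' i, law p c k t i * stepFn p c i j) = 0
    have hz : ∀ i, law p c k t i * stepFn p c i j = 0 := by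
      intro i
      by_cases hi : k + t < i
      · rw [ih i hi, zero_mul]
      · rw [stepFn_eq, if_neg (by omega : j ≠ i + 1), binomPMF, if_neg (by omega : ¬ j ≤ i)]
        ring
    exact (tsum_congr hz).trans tsum_zero

lemma law_eq_sum (p c : ℝ) (k t j N : ℕ) (hN : k + t + 1 ≤ N) :
    law p c k (t+1) j = ∑ i ∈ Finset.range N, law p c k t i * stepFn p c i j := by
  show (∑' i, law p c k t i * stepFn p c i j) = _
  refine tsum_eq_sum ?_
  intro i hi
  rw [Finset.mem_range, not_lt] at hi
  rw [law_support p c k t i (by omega), zero_mul]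

lemma law_shift (p c : ℝ) (hα : (1:ℝ) - c*(1-p) ≠ 0) (k : ℕ) : ∀ t j,
    law p c (k+1) t j = law p c k t j + (1 - c*(1-p))^t *
      ((if j = 0 then 0 else law (p / (1 - c*(1-p))) c k t (j-1))
        - law (p / (1 - c*(1-p))) c k t j) := by
  intro t
  induction t with
  | zero =>
    intro j
    rcases j with _ | j'
    · simp only [law, pow_zero]
      rw [if_neg (by omega : (0:ℕ) ≠ k + 1)]
      norm_num
    · simp only [law, pow_zero, if_neg (Nat.succ_ne_zero j'), Nat.succ_sub_one]
      by_cases h : j' = k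
      · rw [if_pos (by omega : j' + 1 = k + 1), if_neg (by omega : ¬ j' + 1 = k), if_pos h]
        ring
      · rw [if_neg (by omega : ¬ j' + 1 = k + 1), if_neg h]
        ring
  | succ t ih =>
    intro j
    set α : ℝ := 1 - c*(1-p) with hαdef
    set q : ℝ := p / α with hqdef
    set N : ℕ := k + t + 1 with hNdef
    set M : ℕ → ℝ := fun i => law q c k t i with hM
    have hL : law p c (k+1) (t+1) j
        = ∑ i ∈ Finset.range (N+1), law p c (k+1) t i * stepFn p c i j :=
      law_eq_sum p c (k+1) t j (N+1) (by omega)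
    rw [hL]
    have step1 : ∑ i ∈ Finset.range (N+1), law p c (k+1) t i * stepFn p c i j
        = (∑ i ∈ Finset.range (N+1), law p c k t i * stepFn p c i j)
          + α^t * ((∑ i ∈ Finset.range (N+1),
                (if i = 0 then 0 else M (i-1)) * stepFn p c i j)
            - ∑ i ∈ Finset.range (N+1), M i * stepFn p c i j) := by
      rw [← Finset.sum_sub_distrib, Finset.mul_sum, ← Finset.sum_add_distrib]
      refine Finset.sum_congr rfl fun i _ => ?_
      rw [ih i]
      ring
    rw [step1]
    have hA : (∑ i ∈ Finset.range (N+1), law p c k t i * stepFn p c i j)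
        = law p c k (t+1) j := (law_eq_sum p c k t j (N+1) (by omega)).symm
    rw [hA]
    have hshift : (∑ i ∈ Finset.range (N+1), (if i = 0 then 0 else M (i-1)) * stepFn p c i j)
        = ∑ i ∈ Finset.range N, M i * stepFn p c (i+1) j := by
      rw [Finset.sum_range_succ' (fun i => (if i = 0 then 0 else M (i-1)) * stepFn p c i j) N]
      simp
    have hdrop : (∑ i ∈ Finset.range (N+1), M i * stepFn p c i j)
        = ∑ i ∈ Finset.range N, M i * stepFn p c i j := by
      rw [Finset.sum_range_succ]
      rw [hM]
      simp only []
      rw [law_support q c k t N (by omega), zero_mul, add_zero]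
    rw [hshift, hdrop, ← Finset.sum_sub_distrib]
    have step2 : ∑ i ∈ Finset.range N, (M i * stepFn p c (i+1) j - M i * stepFn p c i j)
        = α * ∑ i ∈ Finset.range N,
            (M i * (if j = 0 then 0 else stepFn q c i (j-1)) - M i * stepFn q c i j) := by
      rw [Finset.mul_sum]
      refine Finset.sum_congr rfl fun i _ => ?_
      have := step_identity p c hα i j
      calc M i * stepFn p c (i+1) j - M i * stepFn p c i j
          = M i * (stepFn p c (i+1) j - stepFn p c i j) := by ring
        _ = M i * (α * ((if j = 0 then 0 else stepFn q c i (j-1)) - stepFn q c i j)) := by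
            rw [this]
        _ = _ := by ring
    rw [step2, Finset.sum_sub_distrib]
    have hB : (∑ i ∈ Finset.range N, M i * stepFn q c i j) = law q c k (t+1) j :=
      (law_eq_sum q c k t j N (by omega)).symm
    have hC : (∑ i ∈ Finset.range N, M i * (if j = 0 then 0 else stepFn q c i (j-1)))
        = (if j = 0 then 0 else law q c k (t+1) (j-1)) := by
      rcases j with _ | j'
      · simp
      · simp only [if_neg (Nat.succ_ne_zero j'), Nat.succ_sub_one]
        exact (law_eq_sum q c k t j' N (by omega)).symm
    rw [hB, hC]
    ring

lemma massOf_Ioi (q : ℕ → ℝ) (N : ℕ) (hq : ∀ m, N ≤ m → q m = 0) (j : ℕ) :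
    massOf q (Set.Ioi j) = ∑ m ∈ Finset.Ico (j+1) N, q m := by
  classical
  unfold massOf
  rw [tsum_eq_sum (s := Finset.Ico (j+1) N) ?_]
  · refine Finset.sum_congr rfl fun m hm => ?_
    rw [Finset.mem_Ico] at hm
    rw [Set.indicator_apply, if_pos (by exact hm.1 : m ∈ Set.Ioi j)]
  · intro m hm
    rw [Finset.mem_Ico, not_and_or] at hm
    rw [Set.indicator_apply]
    split
    · rename_i hmem
      have : j < m := hmem
      have : N ≤ m := by omega
      exact hq m this
    · rfl

lemma abs_massOf_le (q : ℕ → ℝ) (N : ℕ) (hq : ∀ m, N ≤ m → q m = 0) (A : Set ℕ) :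
    |massOf q A| ≤ ∑ m ∈ Finset.range N, |q m| := by
  classical
  unfold massOf
  rw [tsum_eq_sum (s := Finset.range N) ?_]
  · refine (Finset.abs_sum_le_sum_abs _ _).trans ?_
    refine Finset.sum_le_sum fun m _ => ?_
    rw [Set.indicator_apply]
    split
    · exact le_rfl
    · simpa using abs_nonneg (q m)
  · intro m hm
    rw [Finset.mem_range, not_lt] at hm
    rw [Set.indicator_apply, hq m hm]
    simp

lemma massOf_diff (p c : ℝ) (hα : (1:ℝ) - c*(1-p) ≠ 0) (k t j : ℕ) :
    massOf (law p c (k+1) t) (Set.Ioi j) - massOf (law p c k t) (Set.Ioi j)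
      = (1 - c*(1-p))^t * law (p / (1 - c*(1-p))) c k t j := by
  classical
  set α : ℝ := 1 - c*(1-p) with hαdef
  set q : ℝ := p / α with hqdef
  set N : ℕ := k + t + 2 with hNdef
  set M : ℕ → ℝ := fun m => law q c k t m with hM
  rw [massOf_Ioi (law p c (k+1) t) N (fun m hm => law_support p c (k+1) t m (by omega)) j,
      massOf_Ioi (law p c k t) N (fun m hm => law_support p c k t m (by omega)) j,
      ← Finset.sum_sub_distrib]
  have hterm : ∀ m ∈ Finset.Ico (j+1) N,
      law p c (k+1) t m - law p c k t m = α^t * (M (m-1) - M m) := by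
    intro m hm
    rw [Finset.mem_Ico] at hm
    rw [law_shift p c hα k t m, if_neg (by omega : m ≠ 0)]
    ring
  rw [Finset.sum_congr rfl hterm, Finset.sum_Ico_eq_sum_range]
  have hterm2 : ∀ i ∈ Finset.range (N - (j+1)),
      α^t * (M (j + 1 + i - 1) - M (j + 1 + i))
        = α^t * M (j + i) - α^t * M (j + (i+1)) := by
    intro i _
    have h1 : j + 1 + i - 1 = j + i := by omega
    have h2 : j + 1 + i = j + (i + 1) := by omega
    rw [h1, h2]
    ring
  rw [Finset.sum_congr rfl hterm2,
      Finset.sum_range_sub' (fun i => α^t * M (j + i)) (N - (j+1))]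
  rcases le_or_gt (j+1) N with hj | hj
  · have hNj : j + (N - (j+1)) = k + t + 1 := by omega
    rw [hNj, add_zero]
    simp only [hM]
    rw [law_support q c k t (k+t+1) (by omega)]
    ring
  · have h0 : N - (j+1) = 0 := by omega
    rw [h0, add_zero, sub_self]
    rw [show law (p / (1 - c*(1-p))) c k t j = 0 from law_support _ c k t j (by omega)]
    ring

/-- **Theorem 3.3.** Let `α = 1 - c(1-p)` and `p̃ = p/α`. For `x < y`,
`d_t(x, y) ≥ α^t · sup_j Σ_{k=x}^{y-1} P_k^{(p̃)}(X_t = j)`. -/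
theorem tv_lower_bound
    (p c : ℝ) (hp : p ∈ Set.Ioo (0 : ℝ) 1) (hc : c ∈ Set.Ioc (0 : ℝ) 1)
    (x y t : ℕ) (hxy : x < y) :
    (1 - c * (1 - p)) ^ t *
        ⨆ j : ℕ, ∑ k ∈ Finset.Ico x y, law (p / (1 - c * (1 - p))) c k t j ≤
      tvDist (law p c y t) (law p c x t) := by
  classical
  obtain ⟨hp0, hp1⟩ := hp
  obtain ⟨hc0, hc1⟩ := hc
  set α : ℝ := 1 - c * (1 - p) with hαdef
  have hαpos : 0 < α := by
    have h1 : c * (1 - p) ≤ 1 - p := mul_le_of_le_one_left (by linarith) hc1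
    rw [hαdef]; linarith
  have hαne : α ≠ 0 := ne_of_gt hαpos
  set q : ℝ := p / α with hqdef
  set N : ℕ := x + y + t + 2 with hNdef
  set T : ℝ := tvDist (law p c y t) (law p c x t) with hT
  -- telescoping over k
  have hdiff : ∀ j : ℕ, massOf (law p c y t) (Set.Ioi j) - massOf (law p c x t) (Set.Ioi j)
      = α ^ t * ∑ k ∈ Finset.Ico x y, law q c k t j := by
    intro j
    set F : ℕ → ℝ := fun z => massOf (law p c z t) (Set.Ioi j) with hF
    have htele : ∑ k ∈ Finset.Ico x y, (F (k+1) - F k) = F y - F x := by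
      rw [Finset.sum_Ico_eq_sub _ hxy.le,
          Finset.sum_range_sub (f := F), Finset.sum_range_sub (f := F)]
      ring
    have hterm : ∀ k ∈ Finset.Ico x y, F (k+1) - F k = α ^ t * law q c k t j := by
      intro k _
      exact massOf_diff p c hαne k t j
    rw [show massOf (law p c y t) (Set.Ioi j) - massOf (law p c x t) (Set.Ioi j)
        = F y - F x from rfl, ← htele, Finset.sum_congr rfl hterm, Finset.mul_sum]
  -- boundedness of the tv family
  have hBdd : BddAbove (Set.range fun A : Set ℕ =>
      |massOf (law p c y t) A - massOf (law p c x t) A|) := by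
    refine ⟨(∑ m ∈ Finset.range N, |law p c y t m|)
        + ∑ m ∈ Finset.range N, |law p c x t m|, ?_⟩
    rintro r ⟨A, rfl⟩
    calc |massOf (law p c y t) A - massOf (law p c x t) A|
        ≤ |massOf (law p c y t) A| + |massOf (law p c x t) A| := abs_sub _ _
      _ ≤ _ := add_le_add
          (abs_massOf_le _ N (fun m hm => law_support p c y t m (by omega)) A)
          (abs_massOf_le _ N (fun m hm => law_support p c x t m (by omega)) A)
  have key : ∀ j : ℕ, α ^ t * ∑ k ∈ Finset.Ico x y, law q c k t j ≤ T := by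
    intro j
    rw [← hdiff j]
    calc massOf (law p c y t) (Set.Ioi j) - massOf (law p c x t) (Set.Ioi j)
        ≤ |massOf (law p c y t) (Set.Ioi j) - massOf (law p c x t) (Set.Ioi j)| :=
          le_abs_self _
      _ ≤ T := le_ciSup hBdd (Set.Ioi j)
  have hpow : 0 < α ^ t := pow_pos hαpos t
  have hsup : (⨆ j : ℕ, ∑ k ∈ Finset.Ico x y, law q c k t j) ≤ T / α ^ t := by
    refine ciSup_le fun j => ?_
    rw [le_div_iff₀ hpow]
    calc (∑ k ∈ Finset.Ico x y, law q c k t j) * α ^ t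
        = α ^ t * ∑ k ∈ Finset.Ico x y, law q c k t j := by ring
      _ ≤ T := key j
  calc α ^ t * (⨆ j : ℕ, ∑ k ∈ Finset.Ico x y, law q c k t j)
      ≤ α ^ t * (T / α ^ t) := mul_le_mul_of_nonneg_left hsup hpow.le
    _ = T := by field_simp
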